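/- For (u, v) ∈ ℝ² with u² + v² < 1, let s = 1 − u² − v², let (x, y, z) = Φ(u,v) = (2u/s, 2v/s, (1+u²+v²)/s), let M(x,y,z) = (1/2)·((z²−y², xy, xz), (xy, z²−x², yz), (xz, yz, x²+y²)), and set α_u = (1/(1+z), 0, −x/(1+z)²), α_v = (0, 1/(1+z), −y/(1+z)²). Then the 2×2 matrix T with entries T₁₁ = α_uᵀMα_u, T₁₂ = T₂₁ = α_uᵀMα_v, T₂₂ = α_vᵀMα_v is invertible and T⁻¹ = (8/s²)·I₂. Hence the double bracket metric on ℍ² in the stereographic disc coordinates (u,v) is τ_db = (8/(1−u²−v²)²)·(du² + dv²), i.e. twice the hyperbolic metric of the Poincaré open disc model. -/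

import Mathlib

open Matrix

set_option maxHeartbeats 1000000 in
/-- In stereographic disc coordinates `(u,v)` (with `u²+v² < 1`,
`s = 1−u²−v²`) on the upper sheet `ℍ²` of `x²+y²−z² = −1`, the 2×2 matrix `T` of the
co-metric double bracket tensor restricted to `T*ℍ²` is invertible with
`T⁻¹ = (8/s²)·I₂`: the double bracket metric is `τ_db = (8/(1−u²−v²)²)(du²+dv²)`,
twice the hyperbolic metric of the Poincaré disc. -/
theorem sl2_double_bracket_metric_poincare_disc
    (u v : ℝ) (h : u ^ 2 + v ^ 2 < 1) :
    let s : ℝ := 1 - u ^ 2 - v ^ 2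
    let x : ℝ := 2 * u / s
    let y : ℝ := 2 * v / s
    let z : ℝ := (1 + u ^ 2 + v ^ 2) / s
    let M : Matrix (Fin 3) (Fin 3) ℝ :=
      (1 / 2 : ℝ) •
        !![z ^ 2 - y ^ 2, x * y, x * z;
           x * y, z ^ 2 - x ^ 2, y * z;
           x * z, y * z, x ^ 2 + y ^ 2]
    let αu : Fin 3 → ℝ := ![1 / (1 + z), 0, -x / (1 + z) ^ 2]
    let αv : Fin 3 → ℝ := ![0, 1 / (1 + z), -y / (1 + z) ^ 2]
    let T : Matrix (Fin 2) (Fin 2) ℝ :=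
      !![αu ⬝ᵥ M.mulVec αu, αu ⬝ᵥ M.mulVec αv;
         αu ⬝ᵥ M.mulVec αv, αv ⬝ᵥ M.mulVec αv]
    IsUnit T ∧ T⁻¹ = (8 / s ^ 2) • (1 : Matrix (Fin 2) (Fin 2) ℝ) := by
  intro s x y z M αu αv T
  have hs0 : (0:ℝ) < s := by simp only [s]; nlinarith
  have hs : s ≠ 0 := ne_of_gt hs0
  have hz : 1 + z = 2 / s := by
    simp only [z, s]
    have hs'' : (1 : ℝ) - u ^ 2 - v ^ 2 ≠ 0 := hs
    field_simp
    ring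
  have hau : αu = ![s / 2, 0, -(u * s) / 2] := by
    funext i
    fin_cases i <;>
      simp only [αu, hz, x, Matrix.cons_val_zero, Matrix.cons_val_one, Matrix.head_cons,
        Fin.mk_zero, Fin.mk_one, Matrix.cons_val_two, Matrix.tail_cons] <;>
      field_simp <;> ring
  have hav : αv = ![0, s / 2, -(v * s) / 2] := by
    funext i
    fin_cases i <;>
      simp only [αv, hz, y, Matrix.cons_val_zero, Matrix.cons_val_one, Matrix.head_cons,
        Fin.mk_zero, Fin.mk_one, Matrix.cons_val_two, Matrix.tail_cons] <;>
      field_simp <;> ring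
  have hs' : (1 : ℝ) - u ^ 2 - v ^ 2 ≠ 0 := hs
  have e11 : αu ⬝ᵥ M.mulVec αu = s ^ 2 / 8 := by
    simp only [hau, M, x, y, z, s, Matrix.mulVec, dotProduct, Fin.sum_univ_three,
      Matrix.smul_apply, Matrix.cons_val_zero, Matrix.cons_val_one, Matrix.head_cons,
      Matrix.cons_val_two, Matrix.tail_cons, smul_eq_mul, Matrix.of_apply]
    field_simp
    ring
  have e12 : αu ⬝ᵥ M.mulVec αv = 0 := by
    simp only [hau, hav, M, x, y, z, s, Matrix.mulVec, dotProduct, Fin.sum_univ_three,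
      Matrix.smul_apply, Matrix.cons_val_zero, Matrix.cons_val_one, Matrix.head_cons,
      Matrix.cons_val_two, Matrix.tail_cons, smul_eq_mul, Matrix.of_apply]
    field_simp
    ring
  have e22 : αv ⬝ᵥ M.mulVec αv = s ^ 2 / 8 := by
    simp only [hav, M, x, y, z, s, Matrix.mulVec, dotProduct, Fin.sum_univ_three,
      Matrix.smul_apply, Matrix.cons_val_zero, Matrix.cons_val_one, Matrix.head_cons,
      Matrix.cons_val_two, Matrix.tail_cons, smul_eq_mul, Matrix.of_apply]
    field_simp
    ring
  have hT : T = (s ^ 2 / 8) • (1 : Matrix (Fin 2) (Fin 2) ℝ) := by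
    simp only [T, e11, e12, e22]
    ext i j
    fin_cases i <;> fin_cases j <;>
      simp [Matrix.one_apply]
  have hmul : T * ((8 / s ^ 2) • (1 : Matrix (Fin 2) (Fin 2) ℝ)) = 1 := by
    rw [hT, smul_mul_assoc, one_mul, smul_smul]
    have h1 : s ^ 2 / 8 * (8 / s ^ 2) = 1 := by field_simp
    rw [h1, one_smul]
  exact ⟨(Matrix.isUnit_iff_isUnit_det T).mpr (Matrix.isUnit_det_of_right_inverse hmul), Matrix.inv_eq_right_inv hmul⟩
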